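/- For s a positive integer and ν a complex number with q^{ν+k} ≠ 1 for all nonnegative integers k, the series ∑_{k=0}^{∞} q^{sk} / (q^{ν+k}; q)_{s+1} converges and equals 1 / ((1 - q^s) (q^{ν}; q)_s). -/

import Mathlib

open Classical

open Filter Finset

theorem qsum_pochhammer (q : ℝ) (hq0 : 0 < q) (hq1 : q < 1) (s : ℕ) (hs : 0 < s) (ν : ℂ)
    (hν : ∀ k : ℕ, (q : ℂ) ^ (ν + (k : ℂ)) ≠ 1) :
    HasSum (fun k : ℕ => (q : ℂ) ^ (s * k) /
        ∏ j ∈ Finset.range (s + 1), (1 - (q : ℂ) ^ (ν + (k : ℂ)) * (q : ℂ) ^ j))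
      (1 / ((1 - (q : ℂ) ^ s) * ∏ j ∈ Finset.range s, (1 - (q : ℂ) ^ ν * (q : ℂ) ^ j))) := by
  have hqC : (q:ℂ) ≠ 0 := by
    simpa using hq0.ne'
  set w : ℂ := (q:ℂ) ^ ν with hw
  have hp : ∀ k : ℕ, (q:ℂ) ^ (ν + (k:ℂ)) = w * (q:ℂ)^k := by
    intro k
    rw [Complex.cpow_add _ _ hqC, Complex.cpow_natCast]
  have hw1 : ∀ n : ℕ, w * (q:ℂ)^n ≠ 1 := by
    intro n
    rw [← Complex.cpow_natCast, ← Complex.cpow_add _ _ hqC]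
    exact hν n
  -- basic nonvanishing facts
  have hfac : ∀ k j : ℕ, (1 - w * (q:ℂ)^k * (q:ℂ)^j) ≠ 0 := by
    intro k j
    rw [mul_assoc, ← pow_add]
    intro h
    exact hw1 (k + j) (by linear_combination -h)
  set P : ℕ → ℕ → ℂ := fun m k => ∏ j ∈ Finset.range m, (1 - w * (q:ℂ)^k * (q:ℂ)^j) with hP
  have hPne : ∀ m k, P m k ≠ 0 := by
    intro m k
    exact Finset.prod_ne_zero_iff.2 fun j _ => hfac k j
  have hqs1 : (1 - (q:ℂ)^s) ≠ 0 := by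
    intro h
    have : (q:ℂ)^s = 1 := by linear_combination -h
    have hr : (q:ℝ)^s = 1 := by exact_mod_cast this
    nlinarith [pow_lt_one₀ hq0.le hq1 hs.ne']
  set f : ℕ → ℂ := fun k => (q:ℂ)^(s*k) / P (s+1) k with hf
  set b : ℕ → ℂ := fun k => (q:ℂ)^(s*k) / ((1 - (q:ℂ)^s) * P s k) with hb
  -- product identities
  have h1 : ∀ k, P (s+1) k = P s k * (1 - w * (q:ℂ)^k * (q:ℂ)^s) := by
    intro k; exact Finset.prod_range_succ _ _
  have h2 : ∀ k, P (s+1) k = (1 - w * (q:ℂ)^k) * P s (k+1) := by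
    intro k
    show (∏ j ∈ Finset.range (s+1), (1 - w * (q:ℂ)^k * (q:ℂ)^j)) =
      (1 - w * (q:ℂ)^k) * ∏ j ∈ Finset.range s, (1 - w * (q:ℂ)^(k+1) * (q:ℂ)^j)
    rw [Finset.prod_range_succ']
    simp only [pow_zero, mul_one]
    rw [mul_comm]
    congr 1
    apply Finset.prod_congr rfl
    intro j _
    ring
  -- telescoping identity
  have key : ∀ k, b k - b (k+1) = f k := by
    intro k
    have e1 := h1 k
    have e2 := h2 k
    have hA : P s k ≠ 0 := hPne s k
    have hB : P s (k+1) ≠ 0 := hPne s (k+1)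
    have hD : P (s+1) k ≠ 0 := hPne (s+1) k
    have hpow : (q:ℂ)^(s*(k+1)) = (q:ℂ)^(s*k) * (q:ℂ)^s := by
      rw [Nat.mul_succ, pow_add]
    show (q:ℂ)^(s*k) / ((1 - (q:ℂ)^s) * P s k) - (q:ℂ)^(s*(k+1)) / ((1 - (q:ℂ)^s) * P s (k+1))
      = (q:ℂ)^(s*k) / P (s+1) k
    rw [hpow, div_sub_div _ _ (mul_ne_zero hqs1 hA) (mul_ne_zero hqs1 hB),
      div_eq_div_iff (mul_ne_zero (mul_ne_zero hqs1 hA) (mul_ne_zero hqs1 hB)) hD]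
    linear_combination ((q:ℂ)^(s*k) * (1 - (q:ℂ)^s) * P s (k+1)) * e1 -
      ((q:ℂ)^(s*k) * (1 - (q:ℂ)^s) * (q:ℂ)^s * P s k) * e2
  -- norm bounds
  obtain ⟨N, hN⟩ : ∃ N : ℕ, ∀ k ≥ N, ‖w‖ * q^k ≤ 1/2 := by
    have : Tendsto (fun k : ℕ => ‖w‖ * q^k) atTop (nhds (‖w‖ * 0)) :=
      (tendsto_pow_atTop_nhds_zero_of_lt_one hq0.le hq1).const_mul _
    rw [mul_zero] at this
    have := this.eventually_le_const (show (0:ℝ) < 1/2 by norm_num)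
    exact this.exists_forall_of_atTop
  have hfacnorm : ∀ m : ℕ, ∀ k ≥ N, ∀ j : ℕ, (1/2:ℝ) ≤ ‖1 - w * (q:ℂ)^k * (q:ℂ)^j‖ := by
    intro m k hk j
    have h1' : ‖w * (q:ℂ)^k * (q:ℂ)^j‖ ≤ 1/2 := by
      rw [norm_mul, norm_mul, norm_pow, norm_pow, Complex.norm_real, Real.norm_eq_abs,
        abs_of_pos hq0]
      have hqj : q^j ≤ 1 := pow_le_one₀ hq0.le hq1.le
      have := hN k hk
      nlinarith [norm_nonneg w, pow_pos hq0 k, pow_pos hq0 j, pow_nonneg hq0.le k]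
    calc (1/2:ℝ) = 1 - 1/2 := by norm_num
    _ ≤ ‖(1:ℂ)‖ - ‖w * (q:ℂ)^k * (q:ℂ)^j‖ := by rw [norm_one]; linarith
    _ ≤ ‖1 - w * (q:ℂ)^k * (q:ℂ)^j‖ := norm_sub_norm_le _ _
  have hProdnorm : ∀ m : ℕ, ∀ k ≥ N, (1/2:ℝ)^m ≤ ‖P m k‖ := by
    intro m k hk
    rw [hP]
    rw [norm_prod]
    calc (1/2:ℝ)^m = ∏ j ∈ Finset.range m, (1/2:ℝ) := by
          rw [Finset.prod_const, Finset.card_range]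
    _ ≤ ∏ j ∈ Finset.range m, ‖1 - w * (q:ℂ)^k * (q:ℂ)^j‖ :=
        Finset.prod_le_prod (fun j _ => by norm_num) (fun j _ => hfacnorm m k hk j)
  have hnormf : ∀ k ≥ N, ‖f k‖ ≤ 2^(s+1) * q^k := by
    intro k hk
    rw [hf]
    simp only []
    rw [norm_div, norm_pow, Complex.norm_real, Real.norm_eq_abs, abs_of_pos hq0]
    have hden := hProdnorm (s+1) k hk
    have hdenpos : (0:ℝ) < (1/2)^(s+1) := by positivity
    have hPpos : (0:ℝ) < ‖P (s+1) k‖ := lt_of_lt_of_le hdenpos hden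
    have hsk : q^(s*k) ≤ q^k :=
      pow_le_pow_of_le_one hq0.le hq1.le (Nat.le_mul_of_pos_left k hs)
    calc q^(s*k) / ‖P (s+1) k‖ ≤ q^(s*k) / (1/2)^(s+1) :=
          div_le_div_of_nonneg_left (pow_nonneg hq0.le _) hdenpos hden
    _ = 2^(s+1) * q^(s*k) := by rw [div_pow]; field_simp; ring
    _ ≤ 2^(s+1) * q^k := by
        have : (0:ℝ) < 2^(s+1) := by positivity
        nlinarith
  have hsumnorm : Summable fun k => ‖f k‖ := by
    apply Summable.of_norm_bounded_eventually_nat (g := fun k => 2^(s+1) * q^k)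
    · exact (summable_geometric_of_lt_one hq0.le hq1).mul_left _
    · filter_upwards [eventually_ge_atTop N] with k hk
      simpa using hnormf k hk
  -- limit of b
  have hblim : Tendsto b atTop (nhds 0) := by
    have hqspos : (0:ℝ) < ‖1 - (q:ℂ)^s‖ := norm_pos_iff.2 hqs1
    apply squeeze_zero_norm' (a := fun n => (q^(s*n)) / (‖1 - (q:ℂ)^s‖ * (1/2)^s))
    · filter_upwards [eventually_ge_atTop N] with n hn
      rw [hb]
      simp only []
      rw [norm_div, norm_pow, Complex.norm_real, Real.norm_eq_abs, abs_of_pos hq0, norm_mul]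
      have hden := hProdnorm s n hn
      apply div_le_div_of_nonneg_left (pow_nonneg hq0.le _) (by positivity)
      exact mul_le_mul_of_nonneg_left hden hqspos.le
    · have : Tendsto (fun n : ℕ => (q^s)^n / (‖1 - (q:ℂ)^s‖ * (1/2)^s)) atTop (nhds (0 / (‖1 - (q:ℂ)^s‖ * (1/2)^s))) :=
        ((tendsto_pow_atTop_nhds_zero_of_lt_one (pow_nonneg hq0.le s)
          (pow_lt_one₀ hq0.le hq1 hs.ne')).div_const _)
      rw [zero_div] at this
      convert this using 2 with n
      rw [pow_mul]
  -- assemble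
  simp only [hp]
  have htarget : (1 / ((1 - (q : ℂ) ^ s) * ∏ j ∈ Finset.range s, (1 - w * (q : ℂ) ^ j))) = b 0 := by
    rw [hb]
    simp [hP]
  have hfun : (fun k : ℕ => (q : ℂ) ^ (s * k) /
      ∏ j ∈ Finset.range (s + 1), (1 - w * (q:ℂ)^(k:ℕ) * (q : ℂ) ^ j)) = f := by
    funext k; rw [hf]
  rw [htarget, hfun]
  rw [hasSum_iff_tendsto_nat_of_summable_norm hsumnorm]
  have hps : ∀ n, ∑ i ∈ Finset.range n, f i = b 0 - b n := by
    intro n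
    rw [← Finset.sum_range_sub' b n]
    exact Finset.sum_congr rfl fun i _ => (key i).symm
  simp only [hps]
  have := (tendsto_const_nhds (x := b 0) (f := atTop)).sub hblim
  simpa using this
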